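/- Assume γ is of class C¹ and f₀ is differentiable. Then there exists a constant C ≥ 0 such that for every index i ≠ j, every N > 0 and every x ∈ [0,1]^m, the map f₁ = CP_γ(f₀, ∂_j, N) satisfies ‖∂_i f₁(x) − ∂_i f₀(x)‖ ≤ C/N. (Property (P₂) of the Corrugation Process.) -/

import Mathlib

open MeasureTheory

/-- The average `γ̄(x) = ∫₀¹ γ(x,s) ds` of a loop family. -/
noncomputable def loopAverage {m n : ℕ}
    (γ : (Fin m → ℝ) → ℝ → EuclideanSpace ℝ (Fin n)) (x : Fin m → ℝ) :
    EuclideanSpace ℝ (Fin n) :=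
  ∫ s in (0:ℝ)..1, γ x s

/-- The Corrugation Process
`CP_γ(f₀, ∂_j, N)(x) = f₀(x) + (1/N) ∫₀^{N x_j} (γ(x,s) − γ̄(x)) ds`. -/
noncomputable def corrugationProcess {m n : ℕ}
    (f₀ : (Fin m → ℝ) → EuclideanSpace ℝ (Fin n))
    (γ : (Fin m → ℝ) → ℝ → EuclideanSpace ℝ (Fin n)) (j : Fin m) (N : ℝ) :
    (Fin m → ℝ) → EuclideanSpace ℝ (Fin n) :=
  fun x => f₀ x + N⁻¹ • ∫ s in (0:ℝ)..(N * x j), (γ x s - loopAverage γ x)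

section Aux

variable {m n : ℕ}

/-- The partial derivative of `γ` in the `x` variables. -/
noncomputable def gDer (γ : (Fin m → ℝ) → ℝ → EuclideanSpace ℝ (Fin n))
    (x : Fin m → ℝ) (s : ℝ) : (Fin m → ℝ) →L[ℝ] EuclideanSpace ℝ (Fin n) :=
  fderiv ℝ (fun y => γ y s) x

/-- The derivative of the loop average. -/
noncomputable def gDerAvg (γ : (Fin m → ℝ) → ℝ → EuclideanSpace ℝ (Fin n))
    (x : Fin m → ℝ) : (Fin m → ℝ) →L[ℝ] EuclideanSpace ℝ (Fin n) :=
  ∫ s in (0:ℝ)..1, gDer γ x s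

/-- The `x`-derivative of the primitive. -/
noncomputable def kker (γ : (Fin m → ℝ) → ℝ → EuclideanSpace ℝ (Fin n))
    (x : Fin m → ℝ) (t : ℝ) : (Fin m → ℝ) →L[ℝ] EuclideanSpace ℝ (Fin n) :=
  ∫ s in (0:ℝ)..t, (gDer γ x s - gDerAvg γ x)

variable {γ : (Fin m → ℝ) → ℝ → EuclideanSpace ℝ (Fin n)}

lemma gDer_hasFDerivAt (hγ : ContDiff ℝ 1 fun p : (Fin m → ℝ) × ℝ => γ p.1 p.2)
    (x : Fin m → ℝ) (s : ℝ) : HasFDerivAt (fun y => γ y s) (gDer γ x s) x := by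
  have h1 : DifferentiableAt ℝ (fun p : (Fin m → ℝ) × ℝ => γ p.1 p.2) (x, s) :=
    (hγ.differentiable one_ne_zero) _
  have : DifferentiableAt ℝ (fun y => γ y s) x :=
    (h1.comp x (differentiableAt_id.prodMk (differentiableAt_const s) :
      DifferentiableAt ℝ (fun y : Fin m → ℝ => (y, s)) x) :)
  exact this.hasFDerivAt

lemma gDer_eq (hγ : ContDiff ℝ 1 fun p : (Fin m → ℝ) × ℝ => γ p.1 p.2)
    (x : Fin m → ℝ) (s : ℝ) :
    gDer γ x s = (fderiv ℝ (fun p : (Fin m → ℝ) × ℝ => γ p.1 p.2) (x, s)).comp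
      ((ContinuousLinearMap.id ℝ (Fin m → ℝ)).prod 0) := by
  have h1 : HasFDerivAt (fun p : (Fin m → ℝ) × ℝ => γ p.1 p.2)
      (fderiv ℝ (fun p : (Fin m → ℝ) × ℝ => γ p.1 p.2) (x, s)) (x, s) :=
    ((hγ.differentiable one_ne_zero) _).hasFDerivAt
  have h2 : HasFDerivAt (fun y : Fin m → ℝ => (y, s))
      ((ContinuousLinearMap.id ℝ (Fin m → ℝ)).prod 0) x :=
    (hasFDerivAt_id x).prodMk (hasFDerivAt_const s x)
  exact (gDer_hasFDerivAt hγ x s).unique (h1.comp x h2 :)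

lemma gDer_cont (hγ : ContDiff ℝ 1 fun p : (Fin m → ℝ) × ℝ => γ p.1 p.2) :
    Continuous fun p : (Fin m → ℝ) × ℝ => gDer γ p.1 p.2 := by
  have : (fun p : (Fin m → ℝ) × ℝ => gDer γ p.1 p.2) =
      fun p => (fderiv ℝ (fun q : (Fin m → ℝ) × ℝ => γ q.1 q.2) p).comp
        ((ContinuousLinearMap.id ℝ (Fin m → ℝ)).prod 0) := by
    funext p
    exact gDer_eq hγ p.1 p.2
  rw [this]
  exact (hγ.continuous_fderiv one_ne_zero).clm_comp continuous_const

lemma gDer_per (hγ_per : ∀ x t, γ x (t + 1) = γ x t) (x : Fin m → ℝ) :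
    Function.Periodic (gDer γ x) 1 := by
  intro s
  unfold gDer
  simp only [hγ_per]

lemma avg_hasFDerivAt (hγ : ContDiff ℝ 1 fun p : (Fin m → ℝ) × ℝ => γ p.1 p.2)
    (x₀ : Fin m → ℝ) : HasFDerivAt (loopAverage γ) (gDerAvg γ x₀) x₀ := by
  obtain ⟨M, hM⟩ := ((isCompact_closedBall x₀ 1).prod (isCompact_Icc (a := (0:ℝ)) (b := 1))
    ).exists_bound_of_continuousOn (gDer_cont hγ).continuousOn
  have key := intervalIntegral.hasFDerivAt_integral_of_dominated_of_fderiv_le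
    (F := fun x t => γ x t) (F' := fun x t => gDer γ x t) (x₀ := x₀)
    (a := (0:ℝ)) (b := 1) (bound := fun _ => M) (μ := volume) (Metric.ball_mem_nhds x₀ one_pos)
    (Filter.Eventually.of_forall fun x =>
      ((hγ.continuous.comp (Continuous.prodMk_right x)).aestronglyMeasurable))
    ((hγ.continuous.comp (Continuous.prodMk_right x₀)).intervalIntegrable 0 1)
    (((gDer_cont hγ).comp (Continuous.prodMk_right x₀)).aestronglyMeasurable)
    (Filter.Eventually.of_forall fun t ht x hx => by
      rw [Set.uIoc_of_le (by norm_num : (0:ℝ) ≤ 1)] at ht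
      exact hM (x, t) ⟨Metric.ball_subset_closedBall hx, ⟨ht.1.le, ht.2⟩⟩)
    intervalIntegrable_const
    (Filter.Eventually.of_forall fun t ht x hx => gDer_hasFDerivAt hγ x t)
  exact key

lemma primitive_hasFDerivAt (hγ : ContDiff ℝ 1 fun p : (Fin m → ℝ) × ℝ => γ p.1 p.2)
    (x₀ : Fin m → ℝ) (a b : ℝ) :
    HasFDerivAt (fun x => ∫ s in a..b, (γ x s - loopAverage γ x))
      (∫ s in a..b, (gDer γ x₀ s - gDerAvg γ x₀)) x₀ := by
  obtain ⟨M, hM⟩ := ((isCompact_closedBall x₀ 1).prod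
    (isCompact_uIcc.union isCompact_uIcc : IsCompact (Set.uIcc a b ∪ Set.uIcc 0 1))
    ).exists_bound_of_continuousOn (gDer_cont hγ).continuousOn
  have havg : ∀ x ∈ Metric.ball x₀ 1, ‖gDerAvg γ x‖ ≤ M := by
    intro x hx
    have := intervalIntegral.norm_integral_le_of_norm_le_const
      (C := M) (f := fun s => gDer γ x s) (a := (0:ℝ)) (b := 1) (fun s hs =>
        hM (x, s) ⟨Metric.ball_subset_closedBall hx, Or.inr (Set.uIoc_subset_uIcc hs)⟩)
    simpa [gDerAvg] using this
  have key := intervalIntegral.hasFDerivAt_integral_of_dominated_of_fderiv_le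
    (F := fun x t => γ x t - loopAverage γ x)
    (F' := fun x t => gDer γ x t - gDerAvg γ x) (x₀ := x₀)
    (a := a) (b := b) (bound := fun _ => M + M) (μ := volume) (Metric.ball_mem_nhds x₀ one_pos)
    (Filter.Eventually.of_forall fun x =>
      (((hγ.continuous.comp (Continuous.prodMk_right x)).sub continuous_const
        ).aestronglyMeasurable))
    (((hγ.continuous.comp (Continuous.prodMk_right x₀)).sub continuous_const
      ).intervalIntegrable a b)
    ((((gDer_cont hγ).comp (Continuous.prodMk_right x₀)).sub continuous_const
      ).aestronglyMeasurable)
    (Filter.Eventually.of_forall fun t ht x hx => by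
      refine (norm_sub_le _ _).trans (add_le_add ?_ (havg x hx))
      exact hM (x, t) ⟨Metric.ball_subset_closedBall hx,
        Or.inl (Set.uIoc_subset_uIcc ht)⟩)
    intervalIntegrable_const
    (Filter.Eventually.of_forall fun t ht x hx =>
      (gDer_hasFDerivAt hγ x t).sub (avg_hasFDerivAt hγ x))
  exact key

lemma loopAverage_continuous (hγ : ContDiff ℝ 1 fun p : (Fin m → ℝ) × ℝ => γ p.1 p.2) :
    Continuous (loopAverage γ) := by
  have : Differentiable ℝ (loopAverage γ) := fun x => (avg_hasFDerivAt hγ x).differentiableAt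
  exact this.continuous

lemma cross_hasFDerivAt (hγ : ContDiff ℝ 1 fun p : (Fin m → ℝ) × ℝ => γ p.1 p.2)
    (x₀ : Fin m → ℝ) (t₀ : ℝ) :
    HasFDerivAt (fun p : (Fin m → ℝ) × ℝ => ∫ s in t₀..p.2, (γ p.1 s - loopAverage γ p.1))
      ((ContinuousLinearMap.snd ℝ (Fin m → ℝ) ℝ).smulRight (γ x₀ t₀ - loopAverage γ x₀))
      (x₀, t₀) := by
  have hΨ : Continuous fun p : (Fin m → ℝ) × ℝ => γ p.1 p.2 - loopAverage γ p.1 :=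
    hγ.continuous.sub ((loopAverage_continuous hγ).comp continuous_fst)
  rw [hasFDerivAt_iff_isLittleO, Asymptotics.isLittleO_iff]
  intro c hc
  obtain ⟨δ, hδpos, hδ⟩ := Metric.continuous_iff.mp hΨ (x₀, t₀) c hc
  filter_upwards [Metric.ball_mem_nhds (x₀, t₀) hδpos] with p hp
  have hint1 : IntervalIntegrable (fun s => γ p.1 s - loopAverage γ p.1) volume t₀ p.2 :=
    ((hγ.continuous.comp (Continuous.prodMk_right p.1)).sub continuous_const).intervalIntegrable _ _
  have hL : ((ContinuousLinearMap.snd ℝ (Fin m → ℝ) ℝ).smulRight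
      (γ x₀ t₀ - loopAverage γ x₀)) (p - (x₀, t₀))
      = (p.2 - t₀) • (γ x₀ t₀ - loopAverage γ x₀) := by
    simp
  have hsplit : (∫ s in t₀..p.2, (γ p.1 s - loopAverage γ p.1))
      - (p.2 - t₀) • (γ x₀ t₀ - loopAverage γ x₀)
      = ∫ s in t₀..p.2, ((γ p.1 s - loopAverage γ p.1) - (γ x₀ t₀ - loopAverage γ x₀)) := by
    rw [intervalIntegral.integral_sub hint1 intervalIntegrable_const,
      intervalIntegral.integral_const]
  have hbound : ∀ s ∈ Set.uIoc t₀ p.2,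
      ‖(γ p.1 s - loopAverage γ p.1) - (γ x₀ t₀ - loopAverage γ x₀)‖ ≤ c := by
    intro s hs
    have hs' : s ∈ Set.uIcc t₀ p.2 := Set.uIoc_subset_uIcc hs
    have hd : dist (p.1, s) (x₀, t₀) < δ := by
      have hdp : dist p (x₀, t₀) < δ := Metric.mem_ball.mp hp
      rw [Prod.dist_eq] at hdp
      have h1 : dist p.1 x₀ < δ := (le_max_left _ _).trans_lt hdp
      have h3 : dist p.2 t₀ < δ := (le_max_right _ _).trans_lt hdp
      have h2 : dist s t₀ ≤ dist p.2 t₀ := by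
        rw [Real.dist_eq, Real.dist_eq]
        rcases Set.mem_uIcc.mp hs' with ⟨h, h'⟩ | ⟨h, h'⟩
        · rw [abs_of_nonneg (by linarith), abs_of_nonneg (by linarith)]; linarith
        · rw [abs_of_nonpos (by linarith), abs_of_nonpos (by linarith)]; linarith
      rw [Prod.dist_eq]
      exact max_lt h1 (h2.trans_lt h3)
    have := hδ (p.1, s) hd
    rw [dist_eq_norm] at this
    exact this.le
  rw [intervalIntegral.integral_same, sub_zero, hL, hsplit]
  calc ‖∫ s in t₀..p.2, ((γ p.1 s - loopAverage γ p.1) - (γ x₀ t₀ - loopAverage γ x₀))‖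
      ≤ c * |p.2 - t₀| := by
        simpa using intervalIntegral.norm_integral_le_of_norm_le_const hbound
    _ ≤ c * ‖p - (x₀, t₀)‖ := by
        apply mul_le_mul_of_nonneg_left _ hc.le
        have : |p.2 - t₀| = ‖(p - (x₀, t₀)).2‖ := by simp [Real.norm_eq_abs]
        rw [this]
        exact norm_snd_le _

lemma primitive2_hasFDerivAt (hγ : ContDiff ℝ 1 fun p : (Fin m → ℝ) × ℝ => γ p.1 p.2)
    (x₀ : Fin m → ℝ) (t₀ : ℝ) :
    HasFDerivAt (fun p : (Fin m → ℝ) × ℝ => ∫ s in (0:ℝ)..p.2, (γ p.1 s - loopAverage γ p.1))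
      ((kker γ x₀ t₀).comp (ContinuousLinearMap.fst ℝ (Fin m → ℝ) ℝ) +
        (ContinuousLinearMap.snd ℝ (Fin m → ℝ) ℝ).smulRight (γ x₀ t₀ - loopAverage γ x₀))
      (x₀, t₀) := by
  have heq : (fun p : (Fin m → ℝ) × ℝ => ∫ s in (0:ℝ)..p.2, (γ p.1 s - loopAverage γ p.1)) =
      fun p => (∫ s in (0:ℝ)..t₀, (γ p.1 s - loopAverage γ p.1)) +
        ∫ s in t₀..p.2, (γ p.1 s - loopAverage γ p.1) := by
    funext p
    have hcont : Continuous fun s => γ p.1 s - loopAverage γ p.1 :=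
      (hγ.continuous.comp (Continuous.prodMk_right p.1)).sub continuous_const
    rw [← intervalIntegral.integral_add_adjacent_intervals
      (hcont.intervalIntegrable 0 t₀) (hcont.intervalIntegrable t₀ p.2)]
  rw [heq]
  exact ((primitive_hasFDerivAt hγ x₀ 0 t₀).comp (x₀, t₀) hasFDerivAt_fst).add
    (cross_hasFDerivAt hγ x₀ t₀)

lemma kker_per (hγ : ContDiff ℝ 1 fun p : (Fin m → ℝ) × ℝ => γ p.1 p.2)
    (hγ_per : ∀ x t, γ x (t + 1) = γ x t) (x : Fin m → ℝ) :
    Function.Periodic (kker γ x) 1 := by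
  intro t
  have hcont : Continuous fun s => gDer γ x s :=
    (gDer_cont hγ).comp (Continuous.prodMk_right x)
  have hint : ∀ a b : ℝ, IntervalIntegrable (fun s => gDer γ x s - gDerAvg γ x) volume a b :=
    fun a b => (hcont.sub continuous_const).intervalIntegrable a b
  have hsplit : kker γ x (t + 1) = kker γ x t +
      ∫ s in t..(t + 1), (gDer γ x s - gDerAvg γ x) := by
    unfold kker
    rw [intervalIntegral.integral_add_adjacent_intervals (hint 0 t) (hint t (t + 1))]
  have hz : (∫ s in t..(t + 1), (gDer γ x s - gDerAvg γ x)) = 0 := by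
    rw [intervalIntegral.integral_sub (hcont.intervalIntegrable t (t+1)) intervalIntegrable_const,
      intervalIntegral.integral_const]
    have hper : (∫ s in t..(t + 1), gDer γ x s) = ∫ s in (0:ℝ)..(0 + 1), gDer γ x s :=
      (gDer_per hγ_per x).intervalIntegral_add_eq t 0
    rw [hper]
    simp [gDerAvg]
  rw [hsplit, hz, add_zero]

end Aux

/-- Property (P₂) of the Corrugation Process: for `i ≠ j`,
`‖∂_i f₁ − ∂_i f₀‖_{C⁰} = O(1/N)` on `[0,1]^m`. -/
theorem corrugationProcess_P2 {m n : ℕ} (hm : 1 ≤ m) (hn : 1 ≤ n) (j : Fin m)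
    (f₀ : (Fin m → ℝ) → EuclideanSpace ℝ (Fin n))
    (γ : (Fin m → ℝ) → ℝ → EuclideanSpace ℝ (Fin n))
    (hγ_C1 : ContDiff ℝ 1 fun p : (Fin m → ℝ) × ℝ => γ p.1 p.2)
    (hγ_per : ∀ x t, γ x (t + 1) = γ x t)
    (hf₀ : Differentiable ℝ f₀) :
    ∃ C : ℝ, 0 ≤ C ∧ ∀ i : Fin m, i ≠ j → ∀ N : ℝ, 0 < N → ∀ x : Fin m → ℝ,
      (∀ i', x i' ∈ Set.Icc (0:ℝ) 1) →
      ‖fderiv ℝ (corrugationProcess f₀ γ j N) x (Pi.single i 1)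
        - fderiv ℝ f₀ x (Pi.single i 1)‖ ≤ C / N := by
  classical
  -- uniform bound for gDer on the cube × [0,1]
  obtain ⟨M, hM⟩ := (((isCompact_univ_pi fun _ : Fin m => isCompact_Icc) :
      IsCompact (Set.univ.pi fun _ : Fin m => Set.Icc (0:ℝ) 1)).prod
      (isCompact_Icc (a := (0:ℝ)) (b := 1))).exists_bound_of_continuousOn
      (gDer_cont hγ_C1).continuousOn
  set M₀ : ℝ := max M 0 with hM₀
  have hM₀0 : 0 ≤ M₀ := le_max_right _ _
  refine ⟨2 * M₀, by positivity, ?_⟩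
  intro i hij N hN x hx
  have hxK : ∀ s ∈ Set.Icc (0:ℝ) 1, ‖gDer γ x s‖ ≤ M₀ := fun s hs =>
    le_max_of_le_left (hM (x, s) ⟨Set.mem_univ_pi.mpr hx, hs⟩)
  -- derivative of the corrugation process
  set v : Fin m → ℝ := Pi.single i 1 with hv
  have hvj : v j = 0 := Pi.single_eq_of_ne (Ne.symm hij) 1
  have hproj : HasFDerivAt (fun y : Fin m → ℝ => N * y j)
      (N • ContinuousLinearMap.proj j) x :=
    ((ContinuousLinearMap.proj j : (Fin m → ℝ) →L[ℝ] ℝ).hasFDerivAt).const_mul N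
  have hι : HasFDerivAt (fun y : Fin m → ℝ => (y, N * y j))
      ((ContinuousLinearMap.id ℝ (Fin m → ℝ)).prod (N • ContinuousLinearMap.proj j)) x :=
    (hasFDerivAt_id x).prodMk hproj
  have hH := (primitive2_hasFDerivAt hγ_C1 x (N * x j)).comp x hι
  have hcorr : HasFDerivAt (corrugationProcess f₀ γ j N)
      (fderiv ℝ f₀ x + N⁻¹ •
        (((kker γ x (N * x j)).comp (ContinuousLinearMap.fst ℝ (Fin m → ℝ) ℝ) +
          (ContinuousLinearMap.snd ℝ (Fin m → ℝ) ℝ).smulRight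
            (γ x (N * x j) - loopAverage γ x)).comp
          ((ContinuousLinearMap.id ℝ (Fin m → ℝ)).prod (N • ContinuousLinearMap.proj j)))) x :=
    ((hf₀ x).hasFDerivAt).add (hH.const_smul N⁻¹)
  rw [hcorr.fderiv, (hf₀ x).hasFDerivAt.fderiv]
  have happly : (fderiv ℝ f₀ x + N⁻¹ •
        (((kker γ x (N * x j)).comp (ContinuousLinearMap.fst ℝ (Fin m → ℝ) ℝ) +
          (ContinuousLinearMap.snd ℝ (Fin m → ℝ) ℝ).smulRight
            (γ x (N * x j) - loopAverage γ x)).comp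
          ((ContinuousLinearMap.id ℝ (Fin m → ℝ)).prod (N • ContinuousLinearMap.proj j)))) v
      - fderiv ℝ f₀ x v = N⁻¹ • kker γ x (N * x j) v := by
    simp only [ContinuousLinearMap.add_apply, ContinuousLinearMap.smul_apply,
      ContinuousLinearMap.comp_apply, ContinuousLinearMap.prod_apply,
      ContinuousLinearMap.coe_id', id_eq, ContinuousLinearMap.smulRight_apply,
      ContinuousLinearMap.coe_fst', ContinuousLinearMap.coe_snd',
      ContinuousLinearMap.proj_apply]
    rw [hvj]
    simp
  rw [happly]
  -- bound `‖kker γ x (N * x j) v‖` using periodicity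
  set τ : ℝ := Int.fract (N * x j) with hτ
  have hτ0 : 0 ≤ τ := Int.fract_nonneg _
  have hτ1 : τ ≤ 1 := (Int.fract_lt_one _).le
  have hkper : kker γ x (N * x j) = kker γ x τ := by
    have := (kker_per hγ_C1 hγ_per x).sub_int_mul_eq (x := N * x j) ⌊N * x j⌋
    rw [hτ, Int.fract]
    rw [← this]
    norm_num
  have havg : ‖gDerAvg γ x‖ ≤ M₀ := by
    have := intervalIntegral.norm_integral_le_of_norm_le_const
      (C := M₀) (f := fun s => gDer γ x s) (a := (0:ℝ)) (b := 1) (fun s hs => by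
        rw [Set.uIoc_of_le (by norm_num : (0:ℝ) ≤ 1)] at hs
        exact hxK s ⟨hs.1.le, hs.2⟩)
    simpa [gDerAvg] using this
  have hknorm : ‖kker γ x τ‖ ≤ 2 * M₀ := by
    have hb : ∀ s ∈ Set.uIoc (0:ℝ) τ, ‖gDer γ x s - gDerAvg γ x‖ ≤ M₀ + M₀ := by
      intro s hs
      rw [Set.uIoc_of_le hτ0] at hs
      refine (norm_sub_le _ _).trans (add_le_add ?_ havg)
      exact hxK s ⟨hs.1.le, hs.2.trans hτ1⟩
    have := intervalIntegral.norm_integral_le_of_norm_le_const hb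
    have hτabs : |τ - 0| ≤ 1 := by rw [sub_zero, abs_of_nonneg hτ0]; exact hτ1
    calc ‖kker γ x τ‖ ≤ (M₀ + M₀) * |τ - 0| := this
      _ ≤ (M₀ + M₀) * 1 := by
          apply mul_le_mul_of_nonneg_left hτabs (by positivity)
      _ = 2 * M₀ := by ring
  have hvnorm : ‖v‖ ≤ 1 := by
    rw [hv]
    refine (pi_norm_le_iff_of_nonneg zero_le_one).2 fun i' => ?_
    by_cases h : i' = i
    · subst h; simp
    · rw [Pi.single_eq_of_ne h]; simp
  calc ‖N⁻¹ • kker γ x (N * x j) v‖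
      = N⁻¹ * ‖kker γ x τ v‖ := by
        rw [hkper, norm_smul, Real.norm_eq_abs, abs_of_pos (by positivity)]
    _ ≤ N⁻¹ * (2 * M₀) := by
        apply mul_le_mul_of_nonneg_left _ (by positivity)
        calc ‖kker γ x τ v‖ ≤ ‖kker γ x τ‖ * ‖v‖ := (kker γ x τ).le_opNorm v
          _ ≤ (2 * M₀) * 1 := mul_le_mul hknorm hvnorm (norm_nonneg _) (by positivity)
          _ = 2 * M₀ := mul_one _
    _ = 2 * M₀ / N := by rw [div_eq_inv_mul]
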